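/- For 0 < σ < 1 < θ and all h with 0 < h ≤ (1/6)^θ, the sup of first-order differences satisfies sup_{x∈ℝ} |w_{σ,θ}(x+h) − w_{σ,θ}(x)| = h^σ-comparable from below: in fact the essential supremum over x ∈ (a_{2,θ}−h, a_{2,θ}) of |w_{σ,θ}(x+h) − w_{σ,θ}(x)| equals h^σ. Consequently ‖Δ_h w_{σ,θ}‖_{L_∞(ℝ)} ≍ h^σ, so that w_{σ,θ} ∈ B^σ_{∞,∞}(ℝ) but w_{σ,θ} ∉ B^σ_{∞,q}(ℝ) for any q < ∞. -/

import Mathlib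

open MeasureTheory Real Set
open scoped NNReal ENNReal

noncomputable def zetaR (θ : ℝ) : ℝ := ∑' n : ℕ, ((n : ℝ) + 1) ^ (-θ)

noncomputable def aSeq (θ : ℝ) (n : ℕ) : ℝ :=
  4 * ∑ j ∈ Finset.Icc 1 (n - 1), (j : ℝ) ^ (-θ)

noncomputable def wPiece (σ θ : ℝ) (n : ℕ) (ξ : ℝ) : ℝ :=
  if ξ < aSeq θ n + (n : ℝ) ^ (-θ) then (ξ - aSeq θ n) ^ σ
  else if ξ < aSeq θ n + 2 * (n : ℝ) ^ (-θ) then (n : ℝ) ^ (-(θ * σ))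
  else if ξ < aSeq θ n + 3 * (n : ℝ) ^ (-θ) then (aSeq θ n + 3 * (n : ℝ) ^ (-θ) - ξ) ^ σ
  else 0

open Classical in
noncomputable def wFn (σ θ : ℝ) (ξ : ℝ) : ℝ :=
  if h : ∃ n : ℕ, 2 ≤ n ∧ aSeq θ n ≤ ξ ∧ ξ < aSeq θ (n + 1) then wPiece σ θ h.choose ξ
  else 0

/-! ### Auxiliary lemmas -/

lemma rpow_subadd {σ : ℝ} (hσ0 : 0 ≤ σ) (hσ1 : σ ≤ 1) {u v : ℝ} (hu : 0 ≤ u) (hv : 0 ≤ v) :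
    (u + v) ^ σ ≤ u ^ σ + v ^ σ := by
  have h := NNReal.rpow_add_le_add_rpow u.toNNReal v.toNNReal hσ0 hσ1
  have h2 := NNReal.coe_le_coe.2 h
  rw [NNReal.coe_add, NNReal.coe_rpow, NNReal.coe_rpow, NNReal.coe_rpow, NNReal.coe_add,
    Real.coe_toNNReal u hu, Real.coe_toNNReal v hv] at h2
  exact h2

lemma abs_rpow_sub_rpow {σ : ℝ} (hσ0 : 0 < σ) (hσ1 : σ ≤ 1) {u v : ℝ} (hu : 0 ≤ u)
    (hv : 0 ≤ v) : |u ^ σ - v ^ σ| ≤ |u - v| ^ σ := by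
  have key : ∀ a b : ℝ, 0 ≤ a → 0 ≤ b → b ≤ a → |a ^ σ - b ^ σ| ≤ |a - b| ^ σ := by
    intro a b ha hb hba
    have h1 : a ^ σ ≤ (a - b) ^ σ + b ^ σ := by
      have h0 := rpow_subadd hσ0.le hσ1 (sub_nonneg.2 hba) hb
      have he : a - b + b = a := by ring
      rwa [he] at h0
    have h2 : b ^ σ ≤ a ^ σ := Real.rpow_le_rpow hb hba hσ0.le
    rw [abs_of_nonneg (sub_nonneg.2 h2), abs_of_nonneg (sub_nonneg.2 hba)]
    linarith
  rcases le_total v u with h | h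
  · exact key u v hu hv h
  · rw [abs_sub_comm, abs_sub_comm u v]; exact key v u hv hu h

lemma aSeq_succ {θ : ℝ} {n : ℕ} (hn : 1 ≤ n) :
    aSeq θ (n + 1) = aSeq θ n + 4 * (n : ℝ) ^ (-θ) := by
  cases n with
  | zero => omega
  | succ m =>
    simp only [aSeq]
    have h1 : m + 1 + 1 - 1 = m + 1 := rfl
    have h2 : m + 1 - 1 = m := rfl
    rw [h1, h2, Finset.sum_Icc_succ_top (Nat.succ_le_succ (Nat.zero_le m))]
    ring

lemma aSeq_mono {θ : ℝ} {m n : ℕ} (h : m ≤ n) : aSeq θ m ≤ aSeq θ n := by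
  unfold aSeq
  have hsub : Finset.Icc 1 (m - 1) ⊆ Finset.Icc 1 (n - 1) :=
    Finset.Icc_subset_Icc_right (by omega)
  have := Finset.sum_le_sum_of_subset_of_nonneg hsub
    (fun j _ _ => Real.rpow_nonneg (Nat.cast_nonneg j) (-θ))
  linarith

lemma aSeq_two {θ : ℝ} : aSeq θ 2 = 4 := by
  simp [aSeq, Finset.Icc_self]

lemma four_le_aSeq {θ : ℝ} {n : ℕ} (hn : 2 ≤ n) : (4 : ℝ) ≤ aSeq θ n :=
  aSeq_two ▸ aSeq_mono hn

lemma plateau_eq (σ θ : ℝ) (n : ℕ) : (n : ℝ) ^ (-(θ * σ)) = ((n : ℝ) ^ (-θ)) ^ σ := by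
  rw [show -(θ * σ) = (-θ) * σ by ring, Real.rpow_mul (Nat.cast_nonneg n)]

lemma wPiece_nonneg {σ θ : ℝ} {n : ℕ} {ξ : ℝ} (hξ : aSeq θ n ≤ ξ) : 0 ≤ wPiece σ θ n ξ := by
  unfold wPiece
  split_ifs with h1 h2 h3
  · exact Real.rpow_nonneg (by linarith) _
  · exact Real.rpow_nonneg (Nat.cast_nonneg n) _
  · exact Real.rpow_nonneg (by linarith) _
  · exact le_refl 0

lemma wPiece_eq_min {σ θ : ℝ} {n : ℕ} {ξ : ℝ} (hσ0 : 0 < σ) (hd : 0 < (n : ℝ) ^ (-θ))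
    (hξ : aSeq θ n ≤ ξ) :
    wPiece σ θ n ξ =
      min (min ((ξ - aSeq θ n) ^ σ) (((n : ℝ) ^ (-θ)) ^ σ))
        ((max (aSeq θ n + 3 * (n : ℝ) ^ (-θ) - ξ) 0) ^ σ) := by
  unfold wPiece
  rw [plateau_eq σ θ n]
  set a := aSeq θ n with ha
  set d := (n : ℝ) ^ (-θ) with hdd
  split_ifs with h1 h2 h3
  · rw [max_eq_left (by linarith : (0:ℝ) ≤ a + 3 * d - ξ),
      min_eq_left (Real.rpow_le_rpow (by linarith) (by linarith) hσ0.le),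
      min_eq_left (Real.rpow_le_rpow (by linarith) (by linarith) hσ0.le)]
  · rw [max_eq_left (by linarith : (0:ℝ) ≤ a + 3 * d - ξ),
      min_eq_right (Real.rpow_le_rpow hd.le (by linarith) hσ0.le),
      min_eq_left (Real.rpow_le_rpow hd.le (by linarith) hσ0.le)]
  · rw [max_eq_left (by linarith : (0:ℝ) ≤ a + 3 * d - ξ),
      min_eq_right (le_min (Real.rpow_le_rpow (by linarith) (by linarith) hσ0.le)
        (Real.rpow_le_rpow (by linarith) (by linarith) hσ0.le))]
  · rw [max_eq_right (by linarith : a + 3 * d - ξ ≤ 0), Real.zero_rpow hσ0.ne',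
      min_eq_right (le_min (Real.rpow_nonneg (by linarith) σ) (Real.rpow_nonneg hd.le σ))]

lemma wPiece_le_left {σ θ : ℝ} {n : ℕ} {ξ : ℝ} (hσ0 : 0 < σ) (hd : 0 < (n : ℝ) ^ (-θ))
    (hξ : aSeq θ n ≤ ξ) : wPiece σ θ n ξ ≤ (ξ - aSeq θ n) ^ σ := by
  rw [wPiece_eq_min hσ0 hd hξ]
  exact le_trans (min_le_left _ _) (min_le_left _ _)

lemma wPiece_le_plateau {σ θ : ℝ} {n : ℕ} {ξ : ℝ} (hσ0 : 0 < σ) (hd : 0 < (n : ℝ) ^ (-θ))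
    (hξ : aSeq θ n ≤ ξ) : wPiece σ θ n ξ ≤ ((n : ℝ) ^ (-θ)) ^ σ := by
  rw [wPiece_eq_min hσ0 hd hξ]
  exact le_trans (min_le_left _ _) (min_le_right _ _)

lemma wPiece_le_right {σ θ : ℝ} {n : ℕ} {ξ z : ℝ} (hσ0 : 0 < σ) (hd : 0 < (n : ℝ) ^ (-θ))
    (hz : aSeq θ n + 3 * (n : ℝ) ^ (-θ) ≤ z) (hξz : ξ ≤ z) (hξ : aSeq θ n ≤ ξ) :
    wPiece σ θ n ξ ≤ (z - ξ) ^ σ := by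
  rw [wPiece_eq_min hσ0 hd hξ]
  refine le_trans (min_le_right _ _) (Real.rpow_le_rpow (le_max_right _ _) ?_ hσ0.le)
  exact max_le (by linarith) (by linarith)

lemma wPiece_holder {σ θ : ℝ} {n : ℕ} {x y : ℝ} (hσ0 : 0 < σ) (hσ1 : σ ≤ 1)
    (hd : 0 < (n : ℝ) ^ (-θ)) (hx : aSeq θ n ≤ x) (hxy : x ≤ y) :
    |wPiece σ θ n y - wPiece σ θ n x| ≤ (y - x) ^ σ := by
  have hy : aSeq θ n ≤ y := hx.trans hxy
  rw [wPiece_eq_min hσ0 hd hx, wPiece_eq_min hσ0 hd hy]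
  set a := aSeq θ n with ha
  set d := (n : ℝ) ^ (-θ) with hdd
  refine le_trans (abs_min_sub_min_le_max _ _ _ _) (max_le ?_ ?_)
  · refine le_trans (abs_min_sub_min_le_max _ _ _ _) (max_le ?_ ?_)
    · refine le_trans (abs_rpow_sub_rpow hσ0 hσ1 (by linarith : (0:ℝ) ≤ y - a)
        (by linarith : (0:ℝ) ≤ x - a)) ?_
      rw [show y - a - (x - a) = y - x by ring, abs_of_nonneg (by linarith : (0:ℝ) ≤ y - x)]
    · simp only [sub_self, abs_zero]
      exact Real.rpow_nonneg (by linarith) σ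
  · have h2 : |max (a + 3 * d - y) 0 - max (a + 3 * d - x) 0| ≤ y - x := by
      refine le_trans (abs_max_sub_max_le_max _ _ _ _) ?_
      rw [sub_self, abs_zero]
      refine max_le ?_ (by linarith)
      rw [show a + 3 * d - y - (a + 3 * d - x) = x - y by ring, abs_sub_comm,
        abs_of_nonneg (sub_nonneg.2 hxy)]
    refine le_trans (abs_rpow_sub_rpow hσ0 hσ1 (le_max_right _ _) (le_max_right _ _)) ?_
    exact Real.rpow_le_rpow (abs_nonneg _) h2 hσ0.le

lemma wFn_eq {σ θ : ℝ} {n : ℕ} {ξ : ℝ} (hn : 2 ≤ n) (h1 : aSeq θ n ≤ ξ)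
    (h2 : ξ < aSeq θ (n + 1)) : wFn σ θ ξ = wPiece σ θ n ξ := by
  have hex : ∃ m : ℕ, 2 ≤ m ∧ aSeq θ m ≤ ξ ∧ ξ < aSeq θ (m + 1) := ⟨n, hn, h1, h2⟩
  unfold wFn
  rw [dif_pos hex]
  obtain ⟨hm0, hm1, hm2⟩ := hex.choose_spec
  have heq : hex.choose = n := by
    by_contra hne
    rcases Nat.lt_or_ge hex.choose n with hlt | hge
    · have hle : hex.choose + 1 ≤ n := hlt
      have := aSeq_mono (θ := θ) hle
      linarith
    · have hle : n + 1 ≤ hex.choose := by omega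
      have := aSeq_mono (θ := θ) hle
      linarith
  rw [heq]

lemma wFn_zero {σ θ : ℝ} {ξ : ℝ} (hξ : ξ < 4) : wFn σ θ ξ = 0 := by
  unfold wFn
  rw [dif_neg]
  rintro ⟨n, hn, h1, -⟩
  have := four_le_aSeq (θ := θ) hn
  linarith

lemma wFn_holder {σ θ : ℝ} (hσ0 : 0 < σ) (hσ1 : σ ≤ 1) {x y : ℝ} (hxy : x ≤ y) :
    |wFn σ θ y - wFn σ θ x| ≤ (y - x) ^ σ := by
  have hc0 : (0:ℝ) ≤ (y - x) ^ σ := Real.rpow_nonneg (by linarith) σ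
  by_cases hx : ∃ n : ℕ, 2 ≤ n ∧ aSeq θ n ≤ x ∧ x < aSeq θ (n + 1)
  · obtain ⟨n, hn, hn1, hn2⟩ := hx
    have hdn : 0 < (n : ℝ) ^ (-θ) :=
      Real.rpow_pos_of_pos (by exact_mod_cast (by omega : 0 < n)) _
    have hwx : wFn σ θ x = wPiece σ θ n x := wFn_eq hn hn1 hn2
    have haseq := aSeq_succ (θ := θ) (show 1 ≤ n by omega)
    by_cases hy : ∃ m : ℕ, 2 ≤ m ∧ aSeq θ m ≤ y ∧ y < aSeq θ (m + 1)
    · obtain ⟨m, hm, hm1, hm2⟩ := hy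
      have hdm : 0 < (m : ℝ) ^ (-θ) :=
        Real.rpow_pos_of_pos (by exact_mod_cast (by omega : 0 < m)) _
      have hwy : wFn σ θ y = wPiece σ θ m y := wFn_eq hm hm1 hm2
      have hnm : n ≤ m := by
        by_contra hcon
        have hle : m + 1 ≤ n := by omega
        have := aSeq_mono (θ := θ) hle
        linarith
      rcases eq_or_lt_of_le hnm with rfl | hlt
      · rw [hwx, hwy]
        exact wPiece_holder hσ0 hσ1 hdn hn1 hxy
      · have hsucc : n + 1 ≤ m := hlt
        have ham : aSeq θ (n + 1) ≤ aSeq θ m := aSeq_mono hsucc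
        have hxm : x ≤ aSeq θ m := le_of_lt (lt_of_lt_of_le hn2 ham)
        have h1 : wPiece σ θ n x ≤ (aSeq θ m - x) ^ σ :=
          wPiece_le_right hσ0 hdn (by linarith) hxm hn1
        have h1' : wPiece σ θ n x ≤ (y - x) ^ σ :=
          h1.trans (Real.rpow_le_rpow (by linarith) (by linarith) hσ0.le)
        have h2 : wPiece σ θ m y ≤ (y - aSeq θ m) ^ σ := wPiece_le_left hσ0 hdm hm1
        have h2' : wPiece σ θ m y ≤ (y - x) ^ σ :=
          h2.trans (Real.rpow_le_rpow (by linarith) (by linarith) hσ0.le)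
        have hnn1 := wPiece_nonneg (σ := σ) hn1
        have hnn2 := wPiece_nonneg (σ := σ) hm1
        rw [hwx, hwy, abs_sub_le_iff]
        constructor <;> linarith
    · have hwy : wFn σ θ y = 0 := by unfold wFn; rw [dif_neg hy]
      have hay : aSeq θ (n + 1) ≤ y := by
        by_contra hcon
        push_neg at hcon
        exact hy ⟨n, hn, hn1.trans hxy, hcon⟩
      have h1 : wPiece σ θ n x ≤ (y - x) ^ σ :=
        wPiece_le_right hσ0 hdn (by linarith) hxy hn1
      have hnn := wPiece_nonneg (σ := σ) hn1
      rw [hwx, hwy, abs_sub_le_iff]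
      constructor <;> linarith
  · have hwx : wFn σ θ x = 0 := by unfold wFn; rw [dif_neg hx]
    by_cases hy : ∃ m : ℕ, 2 ≤ m ∧ aSeq θ m ≤ y ∧ y < aSeq θ (m + 1)
    · obtain ⟨m, hm, hm1, hm2⟩ := hy
      have hdm : 0 < (m : ℝ) ^ (-θ) :=
        Real.rpow_pos_of_pos (by exact_mod_cast (by omega : 0 < m)) _
      have hwy : wFn σ θ y = wPiece σ θ m y := wFn_eq hm hm1 hm2
      have hxm : x ≤ aSeq θ m := by
        by_contra hcon
        push_neg at hcon
        exact hx ⟨m, hm, hcon.le, lt_of_le_of_lt hxy hm2⟩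
      have h2 : wPiece σ θ m y ≤ (y - aSeq θ m) ^ σ := wPiece_le_left hσ0 hdm hm1
      have h2' : wPiece σ θ m y ≤ (y - x) ^ σ :=
        h2.trans (Real.rpow_le_rpow (by linarith) (by linarith) hσ0.le)
      have hnn := wPiece_nonneg (σ := σ) hm1
      rw [hwx, hwy, abs_sub_le_iff]
      constructor <;> linarith
    · have hwy : wFn σ θ y = 0 := by unfold wFn; rw [dif_neg hy]
      rw [hwx, hwy, sub_zero, abs_zero]
      exact hc0

lemma wFn_holder' {σ θ : ℝ} (hσ0 : 0 < σ) (hσ1 : σ ≤ 1) (x y : ℝ) :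
    |wFn σ θ y - wFn σ θ x| ≤ |y - x| ^ σ := by
  rcases le_total x y with h | h
  · rw [abs_of_nonneg (sub_nonneg.2 h)]
    exact wFn_holder hσ0 hσ1 h
  · rw [abs_sub_comm, abs_sub_comm y x, abs_of_nonneg (sub_nonneg.2 h)]
    exact wFn_holder hσ0 hσ1 h

lemma wFn_nonneg (σ θ : ℝ) (ξ : ℝ) : 0 ≤ wFn σ θ ξ := by
  unfold wFn
  split_ifs with hex
  · exact wPiece_nonneg hex.choose_spec.2.1
  · exact le_refl 0

lemma wFn_le_one {σ θ : ℝ} (hσ0 : 0 < σ) (hθ0 : 0 ≤ θ) (ξ : ℝ) : wFn σ θ ξ ≤ 1 := by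
  unfold wFn
  split_ifs with hex
  · obtain ⟨h2, h1, -⟩ := hex.choose_spec
    have hd : 0 < ((hex.choose : ℕ) : ℝ) ^ (-θ) :=
      Real.rpow_pos_of_pos (by exact_mod_cast (by omega : 0 < hex.choose)) _
    have hb := wPiece_le_plateau (σ := σ) hσ0 hd h1
    have hd1 : ((hex.choose : ℕ) : ℝ) ^ (-θ) ≤ 1 :=
      Real.rpow_le_one_of_one_le_of_nonpos (by exact_mod_cast (by omega : 1 ≤ hex.choose))
        (by linarith)
    have hone : (((hex.choose : ℕ) : ℝ) ^ (-θ)) ^ σ ≤ 1 := Real.rpow_le_one hd.le hd1 hσ0.le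
    linarith
  · norm_num

lemma wFn_continuous {σ θ : ℝ} (hσ0 : 0 < σ) (hσ1 : σ ≤ 1) : Continuous (wFn σ θ) := by
  have hh : HolderWith 1 σ.toNNReal (wFn σ θ) := by
    intro x y
    rw [edist_dist, edist_dist, Real.dist_eq, Real.dist_eq, ENNReal.coe_one, one_mul]
    have hcoe : ((σ.toNNReal : ℝ≥0) : ℝ) = σ := Real.coe_toNNReal σ hσ0.le
    rw [hcoe, ENNReal.ofReal_rpow_of_nonneg (abs_nonneg _) hσ0.le]
    exact ENNReal.ofReal_le_ofReal (wFn_holder' hσ0 hσ1 y x)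
  exact hh.continuous (Real.toNNReal_pos.2 hσ0)

/-- For 0 < σ < 1 < θ and 0 < h ≤ (1/6)^θ: the essential supremum of |Δ_h w_{σ,θ}|
over (a_{2,θ}−h, a_{2,θ}) = (4−h, 4) equals h^σ; consequently ‖Δ_h w_{σ,θ}‖_{L_∞} ≍ h^σ,
so w_{σ,θ} ∈ B^σ_{∞,∞}(ℝ) but w_{σ,θ} ∉ B^σ_{∞,q}(ℝ) for every q < ∞
(via the characterization by first-order differences). -/
theorem stmt9 (σ θ : ℝ) (hσ0 : 0 < σ) (hσ1 : σ < 1) (hθ : 1 < θ) :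
    (∀ h : ℝ, 0 < h → h ≤ (1 / 6 : ℝ) ^ θ →
      eLpNorm (fun x => wFn σ θ (x + h) - wFn σ θ x) ⊤
          (volume.restrict (Set.Ioo (4 - h) 4)) = ENNReal.ofReal (h ^ σ)) ∧
    (∃ c C : ℝ, 0 < c ∧ 0 < C ∧ ∀ h : ℝ, 0 < h → h ≤ (1 / 6 : ℝ) ^ θ →
      ENNReal.ofReal (c * h ^ σ) ≤
          eLpNorm (fun x => wFn σ θ (x + h) - wFn σ θ x) ⊤ volume ∧
      eLpNorm (fun x => wFn σ θ (x + h) - wFn σ θ x) ⊤ volume ≤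
          ENNReal.ofReal (C * h ^ σ)) ∧
    (MeasureTheory.MemLp (wFn σ θ) ⊤ volume ∧
      ∃ C : ℝ, ∀ t : ℝ, 0 < t → t ≤ (1 / 6 : ℝ) ^ θ → ∀ h : ℝ, |h| ≤ t →
        eLpNorm (fun x => wFn σ θ (x + h) - wFn σ θ x) ⊤ volume ≤
          ENNReal.ofReal (C * t ^ σ)) ∧
    (∀ q : ℝ, 0 < q →
      ∫⁻ t in Set.Ioc (0 : ℝ) ((1 / 6 : ℝ) ^ θ),
        (⨆ h ∈ Set.Icc (-t) t,
            eLpNorm (fun x => wFn σ θ (x + h) - wFn σ θ x) ⊤ volume) ^ q *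
          ENNReal.ofReal (t ^ (-(σ * q) - 1)) = ⊤) := by
  have hθ0 : (0:ℝ) < θ := lt_trans one_pos hθ
  have hdpos : (0:ℝ) < (2:ℝ) ^ (-θ) := Real.rpow_pos_of_pos (by norm_num) _
  have h6 : (1 / 6 : ℝ) ^ θ < (2:ℝ) ^ (-θ) := by
    have h1 : (1 / 6 : ℝ) ^ θ < (1 / 2 : ℝ) ^ θ :=
      Real.rpow_lt_rpow (by norm_num) (by norm_num) hθ0
    have h2 : (1 / 2 : ℝ) ^ θ = (2:ℝ) ^ (-θ) := by
      rw [Real.rpow_neg (by norm_num), ← Real.inv_rpow (by norm_num)]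
      norm_num
    linarith
  have hd2 : ((2:ℕ) : ℝ) ^ (-θ) = (2:ℝ) ^ (-θ) := by norm_num
  have ha2 : aSeq θ 2 = 4 := aSeq_two
  have ha3 : aSeq θ 3 = 4 + 4 * (2:ℝ) ^ (-θ) := by
    have h := aSeq_succ (θ := θ) (n := 2) (by norm_num)
    rw [ha2, hd2] at h
    exact h
  -- pointwise formula on (4 - h, 4)
  have key : ∀ h : ℝ, 0 < h → h ≤ (1 / 6 : ℝ) ^ θ → ∀ x ∈ Ioo (4 - h) 4,
      wFn σ θ (x + h) - wFn σ θ x = (x + h - 4) ^ σ := by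
    intro h hh0 hh1 x hx
    obtain ⟨hx1, hx2⟩ := hx
    have hhd : h < (2:ℝ) ^ (-θ) := lt_of_le_of_lt hh1 h6
    have hw0 : wFn σ θ x = 0 := wFn_zero hx2
    have hv1 : aSeq θ 2 ≤ x + h := by rw [ha2]; linarith
    have hv2 : x + h < aSeq θ (2 + 1) := by
      show x + h < aSeq θ 3
      rw [ha3]; linarith
    rw [hw0, sub_zero, wFn_eq (by norm_num) hv1 hv2]
    unfold wPiece
    rw [if_pos (by rw [ha2, hd2]; linarith : x + h < aSeq θ 2 + ((2:ℕ) : ℝ) ^ (-θ)), ha2]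
  -- Part 1
  have part1 : ∀ h : ℝ, 0 < h → h ≤ (1 / 6 : ℝ) ^ θ →
      eLpNorm (fun x => wFn σ θ (x + h) - wFn σ θ x) ⊤
        (volume.restrict (Set.Ioo (4 - h) 4)) = ENNReal.ofReal (h ^ σ) := by
    intro h hh0 hh1
    rw [eLpNorm_exponent_top]
    apply le_antisymm
    · apply eLpNormEssSup_le_of_ae_bound (C := h ^ σ)
      rw [ae_restrict_iff' measurableSet_Ioo]
      refine ae_of_all _ fun x hx => ?_
      have hx1 := hx.1
      have hx2 := hx.2
      rw [key h hh0 hh1 x hx, Real.norm_eq_abs,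
        abs_of_nonneg (Real.rpow_nonneg (by linarith) σ)]
      exact Real.rpow_le_rpow (by linarith) (by linarith) hσ0.le
    · by_contra hcon
      push_neg at hcon
      set L := eLpNormEssSup (fun x => wFn σ θ (x + h) - wFn σ θ x)
        (volume.restrict (Set.Ioo (4 - h) 4)) with hL
      have hLtop : L ≠ ⊤ := ne_top_of_lt hcon
      have hm : L.toReal < h ^ σ := (ENNReal.lt_ofReal_iff_toReal_lt hLtop).1 hcon
      have hm0 : 0 ≤ L.toReal := ENNReal.toReal_nonneg
      have hhσpos : 0 < h ^ σ := Real.rpow_pos_of_pos hh0 σ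
      set c : ℝ := ((L.toReal + h ^ σ) / 2) ^ σ⁻¹ with hc
      have hbase : 0 ≤ (L.toReal + h ^ σ) / 2 := by linarith
      have hcσ : c ^ σ = (L.toReal + h ^ σ) / 2 := by
        rw [hc, ← Real.rpow_mul hbase, inv_mul_cancel₀ hσ0.ne', Real.rpow_one]
      have hc0 : 0 ≤ c := Real.rpow_nonneg hbase _
      have hcm : L.toReal < c ^ σ := by rw [hcσ]; linarith
      have hch : c ^ σ < h ^ σ := by rw [hcσ]; linarith
      have hclt : c < h := by
        by_contra hge
        push_neg at hge
        exact absurd (Real.rpow_le_rpow hh0.le hge hσ0.le) (not_le.2 hch)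
      have hcpos : 0 < c := by
        rcases hc0.lt_or_eq with h' | h'
        · exact h'
        · exfalso
          rw [← h', Real.zero_rpow hσ0.ne'] at hcm
          linarith
      have hae := ENNReal.ae_le_essSup (μ := volume.restrict (Set.Ioo (4 - h) 4))
        (fun x => (‖wFn σ θ (x + h) - wFn σ θ x‖₊ : ℝ≥0∞))
      have hLdef : essSup (fun x => (‖wFn σ θ (x + h) - wFn σ θ x‖₊ : ℝ≥0∞))
          (volume.restrict (Set.Ioo (4 - h) 4)) = L := rfl
      rw [hLdef] at hae
      have hnull : (volume.restrict (Set.Ioo (4 - h) 4))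
          {x | ¬ ((‖wFn σ θ (x + h) - wFn σ θ x‖₊ : ℝ≥0∞) ≤ L)} = 0 := ae_iff.1 hae
      have hsub : Ioo (4 - h + c) 4 ⊆
          {x | ¬ ((‖wFn σ θ (x + h) - wFn σ θ x‖₊ : ℝ≥0∞) ≤ L)} := by
        intro x hx
        obtain ⟨hx1, hx2⟩ := hx
        have hxIoo : x ∈ Ioo (4 - h) 4 := ⟨by linarith, hx2⟩
        simp only [Set.mem_setOf_eq, not_le]
        rw [key h hh0 hh1 x hxIoo, ← enorm_eq_nnnorm, Real.enorm_eq_ofReal_abs,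
          abs_of_nonneg (Real.rpow_nonneg (by linarith) σ)]
        have hcx : c ^ σ ≤ (x + h - 4) ^ σ :=
          Real.rpow_le_rpow hc0 (by linarith) hσ0.le
        have hLc : L < ENNReal.ofReal (c ^ σ) :=
          (ENNReal.lt_ofReal_iff_toReal_lt hLtop).2 hcm
        exact lt_of_lt_of_le hLc (ENNReal.ofReal_le_ofReal hcx)
      have hmeas := measure_mono_null hsub hnull
      rw [Measure.restrict_apply measurableSet_Ioo] at hmeas
      have hinter : Ioo (4 - h + c) 4 ∩ Ioo (4 - h) 4 = Ioo (4 - h + c) 4 :=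
        inter_eq_left.2 (fun x hx => ⟨by linarith [hx.1], hx.2⟩)
      rw [hinter, Real.volume_Ioo, ENNReal.ofReal_eq_zero] at hmeas
      linarith
  -- global Hölder bound
  have holderBound : ∀ h : ℝ, ∀ x : ℝ, ‖wFn σ θ (x + h) - wFn σ θ x‖ ≤ |h| ^ σ := by
    intro h x
    rw [Real.norm_eq_abs]
    have hb := wFn_holder' (θ := θ) hσ0 hσ1.le x (x + h)
    rwa [add_sub_cancel_left] at hb
  have part2upper : ∀ h : ℝ, eLpNorm (fun x => wFn σ θ (x + h) - wFn σ θ x) ⊤ volume ≤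
      ENNReal.ofReal (|h| ^ σ) := by
    intro h
    rw [eLpNorm_exponent_top]
    exact eLpNormEssSup_le_of_ae_bound (ae_of_all _ (holderBound h))
  have part1lower : ∀ h : ℝ, 0 < h → h ≤ (1 / 6 : ℝ) ^ θ →
      ENNReal.ofReal (h ^ σ) ≤ eLpNorm (fun x => wFn σ θ (x + h) - wFn σ θ x) ⊤ volume := by
    intro h hh0 hh1
    rw [← part1 h hh0 hh1]
    exact eLpNorm_mono_measure _ Measure.restrict_le_self
  refine ⟨part1, ⟨1, 1, one_pos, one_pos, fun h hh0 hh1 => ?_⟩, ⟨?_, ⟨1, fun t ht0 ht1 h hht => ?_⟩⟩, ?_⟩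
  · constructor
    · rw [one_mul]
      exact part1lower h hh0 hh1
    · rw [one_mul]
      have := part2upper h
      rwa [abs_of_pos hh0] at this
  · -- Memℒp
    apply memLp_top_of_bound (wFn_continuous hσ0 hσ1.le).aestronglyMeasurable 1
    refine ae_of_all _ fun x => ?_
    rw [Real.norm_eq_abs, abs_of_nonneg (wFn_nonneg σ θ x)]
    exact wFn_le_one hσ0 (by linarith) x
  · -- uniform bound for |h| ≤ t
    rw [one_mul]
    refine (part2upper h).trans (ENNReal.ofReal_le_ofReal ?_)
    exact Real.rpow_le_rpow (abs_nonneg h) hht hσ0.le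
  · -- divergence of the Besov q-integral
    intro q hq
    have hεpos : 0 < (1 / 6 : ℝ) ^ θ := Real.rpow_pos_of_pos (by norm_num) θ
    have hlow : ∀ t ∈ Ioc (0:ℝ) ((1 / 6 : ℝ) ^ θ),
        ENNReal.ofReal (t ^ (-1:ℝ)) ≤
          (⨆ h ∈ Set.Icc (-t) t,
              eLpNorm (fun x => wFn σ θ (x + h) - wFn σ θ x) ⊤ volume) ^ q *
            ENNReal.ofReal (t ^ (-(σ * q) - 1)) := by
      intro t ht
      obtain ⟨ht0, ht1⟩ := ht
      have hN := part1lower t ht0 ht1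
      have htmem : t ∈ Set.Icc (-t) t := Set.mem_Icc.2 ⟨by linarith, le_refl t⟩
      have hsup : eLpNorm (fun x => wFn σ θ (x + t) - wFn σ θ x) ⊤ volume ≤
          ⨆ h ∈ Set.Icc (-t) t,
            eLpNorm (fun x => wFn σ θ (x + h) - wFn σ θ x) ⊤ volume :=
        le_biSup (fun h => eLpNorm (fun x => wFn σ θ (x + h) - wFn σ θ x) ⊤ volume) htmem
      have h1 : ENNReal.ofReal (t ^ σ) ^ q ≤
          (⨆ h ∈ Set.Icc (-t) t,
            eLpNorm (fun x => wFn σ θ (x + h) - wFn σ θ x) ⊤ volume) ^ q :=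
        ENNReal.rpow_le_rpow (hN.trans hsup) hq.le
      have h2 : ENNReal.ofReal (t ^ σ) ^ q = ENNReal.ofReal (t ^ (σ * q)) := by
        rw [ENNReal.ofReal_rpow_of_nonneg (Real.rpow_nonneg ht0.le σ) hq.le,
          Real.rpow_mul ht0.le]
      have h3 : ENNReal.ofReal (t ^ (σ * q)) * ENNReal.ofReal (t ^ (-(σ * q) - 1)) =
          ENNReal.ofReal (t ^ (-1:ℝ)) := by
        rw [← ENNReal.ofReal_mul (Real.rpow_nonneg ht0.le _), ← Real.rpow_add ht0,
          show σ * q + (-(σ * q) - 1) = (-1:ℝ) by ring]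
      rw [← h3]
      exact mul_le_mul_left (h2 ▸ h1) _
    have hbig : ∫⁻ t in Ioc (0:ℝ) ((1 / 6 : ℝ) ^ θ), ENNReal.ofReal (t ^ (-1:ℝ)) = ⊤ := by
      by_contra hne
      have hmeas : Measurable fun t : ℝ => t ^ (-1:ℝ) := by fun_prop
      have hnotint : ¬ IntegrableOn (fun t : ℝ => t ^ (-1:ℝ)) (Ioo (0:ℝ) ((1 / 6 : ℝ) ^ θ)) := by
        rw [intervalIntegral.integrableOn_Ioo_rpow_iff hεpos]
        norm_num
      apply hnotint
      apply IntegrableOn.mono_set _ Ioo_subset_Ioc_self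
      constructor
      · exact hmeas.aestronglyMeasurable
      · rw [hasFiniteIntegral_iff_norm]
        have hcong : ∫⁻ t in Ioc (0:ℝ) ((1 / 6 : ℝ) ^ θ), ENNReal.ofReal ‖t ^ (-1:ℝ)‖ =
            ∫⁻ t in Ioc (0:ℝ) ((1 / 6 : ℝ) ^ θ), ENNReal.ofReal (t ^ (-1:ℝ)) := by
          apply setLIntegral_congr_fun measurableSet_Ioc
          intro t ht
          dsimp only
          rw [Real.norm_eq_abs, abs_of_nonneg (Real.rpow_nonneg ht.1.le _)]
        rw [hcong]
        exact lt_top_iff_ne_top.2 hne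
    refine eq_top_iff.2 ?_
    calc (⊤ : ℝ≥0∞) = ∫⁻ t in Ioc (0:ℝ) ((1 / 6 : ℝ) ^ θ), ENNReal.ofReal (t ^ (-1:ℝ)) :=
          hbig.symm
      _ ≤ _ := lintegral_mono_ae ((ae_restrict_iff' measurableSet_Ioc).2 (ae_of_all _ hlow))
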